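/- (Openness of strict separation.) Let E ⊂ ℝⁿ × ℝ be a bounded parabolic neighborhood (E = U ∩ {t ≤ τ₀} with U open), and let u be upper semi-continuous and v lower semi-continuous on the closure of E, both nonnegative. Define Θ := {τ : u < v on cl(Ω(u;E)) ∩ cl(E) ∩ {t ≤ τ}}, where Ω(u;E) = {(x,t) ∈ E : u(x,t) > 0}. Then Θ is open in ℝ, and Θ = (-∞, T) for some T ∈ (-∞, +∞]. -/
import Mathlib


open Set

/-- Openness of strict separation: for a bounded parabolic neighborhood
`E = U ∩ {t ≤ τ₀}`, `u` USC and `v` LSC on `cl E`, both nonnegative, the set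
`Θ = {τ : u < v on cl(Ω(u;E)) ∩ cl E ∩ {t ≤ τ}}` is open and is of the form
`(-∞, T)` with `T ∈ (-∞, +∞]` (i.e. `Θ = ℝ` or `Θ = Iio T` for some real `T`). -/
theorem stmt6 {n : ℕ} (hn : 1 ≤ n)
    (U : Set (EuclideanSpace ℝ (Fin n) × ℝ)) (τ₀ : ℝ) (hU : IsOpen U)
    (E : Set (EuclideanSpace ℝ (Fin n) × ℝ))
    (hE : E = U ∩ {p | p.2 ≤ τ₀}) (hEne : E.Nonempty)
    (hbdd : Bornology.IsBounded E)
    (u v : EuclideanSpace ℝ (Fin n) × ℝ → ℝ)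
    (hu : UpperSemicontinuousOn u (closure E))
    (hv : LowerSemicontinuousOn v (closure E))
    (hu0 : ∀ p, 0 ≤ u p) (hv0 : ∀ p, 0 ≤ v p) :
    let Θ : Set ℝ :=
      {τ | ∀ p ∈ closure {p ∈ E | 0 < u p} ∩ closure E, p.2 ≤ τ → u p < v p}
    IsOpen Θ ∧ (Θ = Set.univ ∨ ∃ T : ℝ, Θ = Set.Iio T) := by
  intro Θ
  have hΘdef : Θ =
      {τ | ∀ p ∈ closure {p ∈ E | 0 < u p} ∩ closure E, p.2 ≤ τ → u p < v p} := rfl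
  set K : Set (EuclideanSpace ℝ (Fin n) × ℝ) :=
    closure {p ∈ E | 0 < u p} ∩ closure E with hKdef
  have hKclosed : IsClosed K := isClosed_closure.inter isClosed_closure
  have hKsub : K ⊆ closure E := inter_subset_right
  have hcE : IsCompact (closure E) := hbdd.isCompact_closure
  have hKcomp : IsCompact K := hcE.of_isClosed_subset hKclosed hKsub
  set A : Set (EuclideanSpace ℝ (Fin n) × ℝ) := {p ∈ K | v p ≤ u p} with hAdef
  have hAK : A ⊆ K := fun p hp => hp.1
  have hAcE : A ⊆ closure E := fun p hp => hKsub (hAK hp)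
  have hAclosed : IsClosed A := by
    refine isClosed_of_closure_subset ?_
    intro p hpcl
    have hpK : p ∈ K := hKclosed.closure_subset_iff.2 hAK hpcl
    refine ⟨hpK, ?_⟩
    by_contra hlt
    push_neg at hlt
    obtain ⟨c, hc1, hc2⟩ := exists_between hlt
    have hne : (nhdsWithin p A).NeBot := mem_closure_iff_nhdsWithin_neBot.1 hpcl
    have hmono : nhdsWithin p A ≤ nhdsWithin p (closure E) := nhdsWithin_mono p hAcE
    have h1 : ∀ᶠ q in nhdsWithin p A, u q < c := hmono (hu p (hKsub hpK) c hc1)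
    have h2 : ∀ᶠ q in nhdsWithin p A, c < v q := hmono (hv p (hKsub hpK) c hc2)
    have h3 : ∀ᶠ q in nhdsWithin p A, q ∈ A := eventually_mem_nhdsWithin
    obtain ⟨q, hq1, hq2, hq3⟩ := (h1.and (h2.and h3)).exists
    exact absurd ((hq3.2.trans_lt hq1).trans hq2) (lt_irrefl _)
  have hAcomp : IsCompact A := hKcomp.of_isClosed_subset hAclosed hAK
  have hΘA : Θ = {τ | ∀ p ∈ A, τ < p.2} := by
    rw [hΘdef]
    ext τ
    simp only [mem_setOf_eq]
    constructor
    · intro h p hp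
      by_contra hle
      push_neg at hle
      exact absurd (h p hp.1 hle) (not_lt.2 hp.2)
    · intro h p hpK hpt
      by_contra hge
      push_neg at hge
      exact absurd hpt (not_le.2 (h p ⟨hpK, hge⟩))
  rcases A.eq_empty_or_nonempty with hAe | hAne
  · have : Θ = Set.univ := by
      rw [hΘA, hAe]; ext τ; simp
    rw [this]
    exact ⟨isOpen_univ, Or.inl rfl⟩
  · obtain ⟨p₀, hp₀, hmin⟩ := hAcomp.exists_isMinOn hAne continuous_snd.continuousOn
    have : Θ = Set.Iio p₀.2 := by
      rw [hΘA]
      ext τ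
      simp only [mem_setOf_eq, mem_Iio]
      constructor
      · intro h; exact h p₀ hp₀
      · intro h p hp; exact h.trans_le (hmin hp)
    rw [this]
    exact ⟨isOpen_Iio, Or.inr ⟨p₀.2, rfl⟩⟩
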